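/- A unit vector |ψ⟩ ∈ ℂ^d achieves equality M_α(ψ) = (1/(1−α)) log[(1 + (d−1)(d+1)^{1−α})/d] for some (equivalently, every) α ≥ 2 if and only if |⟨ψ|D_a|ψ⟩|² = 1/(d+1) for all a ≠ 0, i.e., |ψ⟩ is a fiducial vector of a Weyl-Heisenberg covariant SIC. -/

import Mathlib

open scoped BigOperators Kronecker
open Matrix

noncomputable section

/-- The primitive `d`-th root of unity `ω = e^{2πi/d}`. -/
def omega (d : ℕ) : ℂ := Complex.exp (2 * Real.pi * Complex.I / d)

/-- A fixed square root of `ω`: `τ = e^{πi/d}`, so `τ ^ 2 = ω`. -/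
def tau (d : ℕ) : ℂ := Complex.exp (Real.pi * Complex.I / d)

/-- Weyl–Heisenberg displacement operator `D_a = ω^{a₁a₂/2} X^{a₁} Z^{a₂}` on `ℂ^d`,
where `X |k⟩ = |k+1⟩` is the shift and `Z |k⟩ = ω^k |k⟩` is the clock (arithmetic mod `d`). -/
def Disp (d : ℕ) (a : ℤ × ℤ) : Matrix (ZMod d) (ZMod d) ℂ := fun j k =>
  tau d ^ (a.1 * a.2) * omega d ^ (a.2 * (k.val : ℤ)) * (if j = k + (a.1 : ZMod d) then 1 else 0)

/-- Rank-one projector `|v⟩⟨v|`. -/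
def proj {n : Type*} (v : n → ℂ) : Matrix n n ℂ := Matrix.vecMulVec v (star v)

/-- Stabilizer entropy of order `α` of a state `ρ` on `ℂ^d`. -/
def stabEntropy (d : ℕ) [NeZero d] (α : ℝ) (ρ : Matrix (ZMod d) (ZMod d) ℂ) : ℝ :=
  (1 / (1 - α)) * Real.log (∑ a : ZMod d × ZMod d,
      ((1 / d) * ‖(Disp d ((a.1.val : ℤ), (a.2.val : ℤ)) * ρ).trace‖ ^ 2) ^ α)
    - Real.log d

lemma omega_ne_zero (d : ℕ) : omega d ≠ 0 := Complex.exp_ne_zero _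
lemma tau_ne_zero (d : ℕ) : tau d ≠ 0 := Complex.exp_ne_zero _

lemma abs_tau (d : ℕ) : ‖tau d‖ = 1 := by
  simp [tau, Complex.norm_exp]

lemma abs_omega (d : ℕ) : ‖omega d‖ = 1 := by
  simp [omega, Complex.norm_exp]

lemma conj_omega (d : ℕ) : (starRingEnd ℂ) (omega d) = (omega d)⁻¹ := by
  rw [← Complex.norm_mul_exp_arg_mul_I (omega d), abs_omega]
  simp [← Complex.exp_conj, ← Complex.exp_neg]

lemma trace_mul_proj {d : ℕ} [NeZero d] (M : Matrix (ZMod d) (ZMod d) ℂ) (ψ : ZMod d → ℂ) :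
    (M * proj ψ).trace = star ψ ⬝ᵥ M.mulVec ψ := by
  simp only [Matrix.trace, Matrix.diag, Matrix.mul_apply, proj, Matrix.vecMulVec_apply,
    dotProduct, Matrix.mulVec, Pi.star_apply, Finset.mul_sum]
  apply Finset.sum_congr rfl
  intros; apply Finset.sum_congr rfl
  intros; simp [RCLike.star_def]; ring

def cc (d : ℕ) [NeZero d] (ψ : ZMod d → ℂ) (s : ZMod d) (n : ℤ) : ℂ :=
  ∑ k : ZMod d, omega d ^ (n * (k.val : ℤ)) * ((starRingEnd ℂ) (ψ (k + s)) * ψ k)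

lemma inner_disp {d : ℕ} [NeZero d] (ψ : ZMod d → ℂ) (m n : ℤ) :
    star ψ ⬝ᵥ (Disp d (m, n)).mulVec ψ = tau d ^ (m * n) * cc d ψ ((m : ZMod d)) n := by
  simp only [dotProduct, Matrix.mulVec, Disp, Pi.star_apply, RCLike.star_def, cc,
    Finset.mul_sum]
  rw [Finset.sum_comm]
  apply Finset.sum_congr rfl
  intro k _
  rw [Finset.sum_eq_single (k + (m : ZMod d))]
  · simp; ring
  · intro j _ hj; simp [hj]
  · simp

lemma sum_pow_val {d : ℕ} [NeZero d] (x : ℂ) (hx : x ^ d = 1) :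
    ∑ b : ZMod d, x ^ b.val = if x = 1 then (d : ℂ) else 0 := by
  have h : ∑ b : ZMod d, x ^ b.val = ∑ i ∈ Finset.range d, x ^ i := by
    apply Finset.sum_nbij' (i := fun b : ZMod d => b.val) (j := fun i : ℕ => (i : ZMod d))
    · intro b _; exact Finset.mem_range.2 (ZMod.val_lt b)
    · intro i _; exact Finset.mem_univ _
    · intro b _; simp [ZMod.natCast_val, ZMod.cast_id]
    · intro i hi; exact ZMod.val_cast_of_lt (Finset.mem_range.1 hi)
    · intro b _; rfl
  rw [h]
  by_cases h1 : x = 1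
  · simp [h1]
  · rw [if_neg h1, geom_sum_eq h1, hx]
    simp

lemma sum_omega_zpow {d : ℕ} [NeZero d] (m : ℤ) :
    ∑ b : ZMod d, omega d ^ ((b.val : ℤ) * m) = if ((m : ZMod d)) = 0 then (d : ℂ) else 0 := by
  have hζ : IsPrimitiveRoot (omega d) d := Complex.isPrimitiveRoot_exp d (NeZero.ne d)
  have h1 : (omega d ^ m) ^ d = 1 := by
    rw [← zpow_natCast, ← _root_.zpow_mul, mul_comm, _root_.zpow_mul, zpow_natCast, hζ.pow_eq_one, _root_.one_zpow]
  have h2 : ∀ b : ZMod d, omega d ^ ((b.val : ℤ) * m) = (omega d ^ m) ^ b.val := by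
    intro b
    rw [mul_comm, _root_.zpow_mul, zpow_natCast]
  rw [Finset.sum_congr rfl (fun b _ => h2 b), sum_pow_val _ h1]
  congr 1
  rw [eq_iff_iff, hζ.zpow_eq_one_iff_dvd, ← ZMod.intCast_zmod_eq_zero_iff_dvd]

lemma conj_omega_zpow (d : ℕ) (z : ℤ) :
    (starRingEnd ℂ) (omega d ^ z) = omega d ^ (-z) := by
  rw [map_zpow₀, conj_omega, _root_.inv_zpow, ← _root_.zpow_neg]

lemma parseval {d : ℕ} [NeZero d] (ψ : ZMod d → ℂ) (s : ZMod d) :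
    ∑ b : ZMod d, cc d ψ s ((b.val : ℤ)) * (starRingEnd ℂ) (cc d ψ s ((b.val : ℤ)))
      = (d : ℂ) * ∑ k : ZMod d,
          (Complex.normSq (ψ (k + s)) : ℂ) * (Complex.normSq (ψ k) : ℂ) := by
  set φ : ZMod d → ℂ := fun k => (starRingEnd ℂ) (ψ (k + s)) * ψ k with hφ
  have expand : ∀ n : ℤ, cc d ψ s n * (starRingEnd ℂ) (cc d ψ s n)
      = ∑ k : ZMod d, ∑ k' : ZMod d,
          omega d ^ (n * ((k.val : ℤ) - (k'.val : ℤ))) * (φ k * (starRingEnd ℂ) (φ k')) := by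
    intro n
    rw [cc, map_sum, Finset.sum_mul_sum]
    apply Finset.sum_congr rfl
    intro k _
    apply Finset.sum_congr rfl
    intro k' _
    rw [_root_.map_mul, conj_omega_zpow]
    have h : n * ((k.val : ℤ) - (k'.val : ℤ)) = n * (k.val : ℤ) + -(n * (k'.val : ℤ)) := by ring
    rw [h, zpow_add₀ (omega_ne_zero d)]
    ring
  calc ∑ b : ZMod d, cc d ψ s ((b.val : ℤ)) * (starRingEnd ℂ) (cc d ψ s ((b.val : ℤ)))
      = ∑ k : ZMod d, ∑ k' : ZMod d, (∑ b : ZMod d,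
          omega d ^ ((b.val : ℤ) * ((k.val : ℤ) - (k'.val : ℤ)))) * (φ k * (starRingEnd ℂ) (φ k')) := by
        rw [Finset.sum_congr rfl (fun b _ => expand _), Finset.sum_comm]
        apply Finset.sum_congr rfl
        intro k _
        rw [Finset.sum_comm]
        exact Finset.sum_congr rfl fun k' _ => (Finset.sum_mul ..).symm
    _ = ∑ k : ZMod d, ∑ k' : ZMod d,
          (if k' = k then (d : ℂ) else 0) * (φ k * (starRingEnd ℂ) (φ k')) := by
        apply Finset.sum_congr rfl
        intro k _
        apply Finset.sum_congr rfl
        intro k' _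
        rw [sum_omega_zpow]
        congr 1
        have : ((((k.val : ℤ) - (k'.val : ℤ)) : ℤ) : ZMod d) = k - k' := by
          push_cast [ZMod.natCast_val, ZMod.cast_id]
          ring
        rw [this]
        congr 1
        rw [eq_iff_iff, sub_eq_zero, eq_comm]
    _ = (d : ℂ) * ∑ k : ZMod d,
          (Complex.normSq (ψ (k + s)) : ℂ) * (Complex.normSq (ψ k) : ℂ) := by
        rw [Finset.mul_sum]
        apply Finset.sum_congr rfl
        intro k _
        rw [Finset.sum_eq_single k]
        · simp only [if_pos rfl, hφ, _root_.map_mul, Complex.conj_conj, if_true]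
          rw [← Complex.mul_conj, ← Complex.mul_conj]
          ring
        · intro k' _ hk'; rw [if_neg hk', zero_mul]
        · simp

def pfun (d : ℕ) [NeZero d] (ψ : ZMod d → ℂ) (a : ZMod d × ZMod d) : ℝ :=
  ‖star ψ ⬝ᵥ ((Disp d ((a.1.val : ℤ), (a.2.val : ℤ))).mulVec ψ)‖ ^ 2

lemma pfun_eq {d : ℕ} [NeZero d] (ψ : ZMod d → ℂ) (a : ZMod d × ZMod d) :
    pfun d ψ a = Complex.normSq (cc d ψ a.1 ((a.2.val : ℤ))) := by
  have hcast : (((a.1.val : ℤ) : ZMod d)) = a.1 := by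
    push_cast [ZMod.natCast_val, ZMod.cast_id]; ring
  rw [pfun, inner_disp, hcast, norm_mul, norm_zpow, abs_tau, _root_.one_zpow, one_mul,
    Complex.sq_norm]

lemma pfun_nonneg {d : ℕ} [NeZero d] (ψ : ZMod d → ℂ) (a : ZMod d × ZMod d) :
    0 ≤ pfun d ψ a := by rw [pfun_eq]; exact Complex.normSq_nonneg _

lemma pfun_zero {d : ℕ} [NeZero d] (ψ : ZMod d → ℂ)
    (hψ : ∑ k, ‖ψ k‖ ^ 2 = 1) : pfun d ψ 0 = 1 := by
  have h0 : cc d ψ (0 : ZMod d) ((0 : ZMod d).val : ℤ) = ((1 : ℝ) : ℂ) := by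
    rw [cc]
    have : ∀ k : ZMod d, omega d ^ (((0 : ZMod d).val : ℤ) * (k.val : ℤ)) *
        ((starRingEnd ℂ) (ψ (k + 0)) * ψ k) = (Complex.normSq (ψ k) : ℂ) := by
      intro k
      simp [Complex.normSq_eq_conj_mul_self]
    rw [Finset.sum_congr rfl fun k _ => this k, ← Complex.ofReal_sum]
    congr 1
    rw [← hψ]
    exact Finset.sum_congr rfl fun k _ => (Complex.sq_norm _).symm
  have := pfun_eq ψ (0 : ZMod d × ZMod d)
  rw [this]
  show Complex.normSq (cc d ψ (0 : ZMod d × ZMod d).1 (((0 : ZMod d × ZMod d).2.val : ℤ))) = 1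
  rw [show ((0 : ZMod d × ZMod d).1) = (0 : ZMod d) from rfl,
    show ((0 : ZMod d × ZMod d).2) = (0 : ZMod d) from rfl, h0]
  simp

lemma sum_pfun {d : ℕ} [NeZero d] (ψ : ZMod d → ℂ)
    (hψ : ∑ k, ‖ψ k‖ ^ 2 = 1) :
    ∑ a : ZMod d × ZMod d, pfun d ψ a = d := by
  have hns : ∑ k : ZMod d, Complex.normSq (ψ k) = 1 := by
    rw [← hψ]; exact Finset.sum_congr rfl fun k _ => (Complex.sq_norm _).symm
  have key : ∀ s : ZMod d, ∑ b : ZMod d, Complex.normSq (cc d ψ s ((b.val : ℤ)))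
      = d * ∑ k : ZMod d, Complex.normSq (ψ (k + s)) * Complex.normSq (ψ k) := by
    intro s
    have := parseval ψ s
    have h2 : ∑ b : ZMod d, cc d ψ s ((b.val : ℤ)) * (starRingEnd ℂ) (cc d ψ s ((b.val : ℤ)))
        = ((∑ b : ZMod d, Complex.normSq (cc d ψ s ((b.val : ℤ))) : ℝ) : ℂ) := by
      rw [Complex.ofReal_sum]
      exact Finset.sum_congr rfl fun b _ => (Complex.mul_conj _)
    rw [h2] at this
    have h3 : ((d : ℂ) * ∑ k : ZMod d,
        (Complex.normSq (ψ (k + s)) : ℂ) * (Complex.normSq (ψ k) : ℂ))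
        = (((d : ℝ) * ∑ k : ZMod d, Complex.normSq (ψ (k + s)) * Complex.normSq (ψ k) : ℝ) : ℂ) := by
      push_cast; ring
    rw [h3] at this
    exact_mod_cast this
  rw [Fintype.sum_prod_type]
  calc ∑ s : ZMod d, ∑ b : ZMod d, pfun d ψ (s, b)
      = ∑ s : ZMod d, ∑ b : ZMod d, Complex.normSq (cc d ψ s ((b.val : ℤ))) :=
        Finset.sum_congr rfl fun s _ => Finset.sum_congr rfl fun b _ => pfun_eq ψ (s, b)
    _ = ∑ s : ZMod d, (d : ℝ) * ∑ k : ZMod d, Complex.normSq (ψ (k + s)) * Complex.normSq (ψ k) :=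
        Finset.sum_congr rfl fun s _ => key s
    _ = (d : ℝ) * ∑ k : ZMod d, Complex.normSq (ψ k) * ∑ s : ZMod d, Complex.normSq (ψ (k + s)) := by
        rw [← Finset.mul_sum, Finset.sum_comm]
        congr 1
        apply Finset.sum_congr rfl
        intro k _
        rw [Finset.mul_sum]
        exact Finset.sum_congr rfl fun s _ => by ring
    _ = (d : ℝ) := by
        have hshift : ∀ k : ZMod d, ∑ s : ZMod d, Complex.normSq (ψ (k + s))
            = ∑ s : ZMod d, Complex.normSq (ψ s) :=
          fun k => Fintype.sum_equiv (Equiv.addLeft k) _ _ (fun s => rfl)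
        rw [Finset.sum_congr rfl fun k _ => by rw [hshift k, hns, mul_one], hns, mul_one]

lemma sum_rpow_eq_iff {d : ℕ} [NeZero d] (ψ : ZMod d → ℂ)
    (hψ : ∑ k, ‖ψ k‖ ^ 2 = 1) (α : ℝ) (hα : 2 ≤ α) :
    (∑ a ∈ Finset.univ.erase (0 : ZMod d × ZMod d), pfun d ψ a ^ α
        = ((d : ℝ) - 1) * ((d : ℝ) + 1) ^ (1 - α)) ↔
      ∀ a : ZMod d × ZMod d, a ≠ 0 → pfun d ψ a = 1 / ((d : ℝ) + 1) := by
  have hd1 : 1 ≤ d := Nat.one_le_iff_ne_zero.2 (NeZero.ne d)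
  rcases eq_or_lt_of_le hd1 with hd | hd
  · -- d = 1
    have hsub : ∀ a : ZMod d × ZMod d, a = 0 := by
      subst hd
      intro a
      exact Subsingleton.elim a 0
    have ht : (Finset.univ.erase (0 : ZMod d × ZMod d)) = ∅ := by
      rw [Finset.eq_empty_iff_forall_notMem]
      intro a ha
      exact (Finset.mem_erase.1 ha).1 (hsub a)
    rw [ht, Finset.sum_empty]
    constructor
    · intro _ a ha; exact absurd (hsub a) ha
    · intro _
      rw [← hd]
      norm_num
  · -- d ≥ 2
    have hdR : (2 : ℝ) ≤ (d : ℝ) := by exact_mod_cast hd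
    have hdp : (0 : ℝ) < (d : ℝ) + 1 := by linarith
    have hdm : (0 : ℝ) < (d : ℝ) - 1 := by linarith
    set t := Finset.univ.erase (0 : ZMod d × ZMod d) with htdef
    have hcard : (t.card : ℝ) = (d : ℝ) * (d : ℝ) - 1 := by
      rw [htdef, Finset.card_erase_of_mem (Finset.mem_univ _), Finset.card_univ]
      have : Fintype.card (ZMod d × ZMod d) = d * d := by
        rw [Fintype.card_prod, ZMod.card]
      rw [this, Nat.cast_sub (Nat.one_le_iff_ne_zero.2 (by positivity)), Nat.cast_mul,
        Nat.cast_one]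
    have hN : (d : ℝ) * (d : ℝ) - 1 = ((d : ℝ) - 1) * ((d : ℝ) + 1) := by ring
    have hNpos : (0 : ℝ) < (d : ℝ) * (d : ℝ) - 1 := by nlinarith
    have hsum_t : ∑ a ∈ t, pfun d ψ a = (d : ℝ) - 1 := by
      rw [htdef, Finset.sum_erase_eq_sub (Finset.mem_univ _), sum_pfun ψ hψ, pfun_zero ψ hψ]
    set w : ℝ := ((d : ℝ) * (d : ℝ) - 1)⁻¹ with hwdef
    have hwpos : 0 < w := by positivity
    have h₁ : ∑ _a ∈ t, w = 1 := by
      rw [Finset.sum_const, nsmul_eq_mul, hcard, hwdef, mul_inv_cancel₀ hNpos.ne']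
    have hcenter : ∑ a ∈ t, w • pfun d ψ a = 1 / ((d : ℝ) + 1) := by
      rw [← Finset.smul_sum, hsum_t, smul_eq_mul, hwdef, hN]
      field_simp
    have hf : StrictConvexOn ℝ (Set.Ici 0) fun x : ℝ => x ^ α :=
      strictConvexOn_rpow (by linarith)
    have hmem : ∀ a ∈ t, pfun d ψ a ∈ Set.Ici (0 : ℝ) := fun a _ => pfun_nonneg ψ a
    have e1 : (1 / ((d : ℝ) + 1)) ^ α = ((d : ℝ) + 1) ^ (-α) := by
      rw [one_div, Real.inv_rpow hdp.le, ← Real.rpow_neg hdp.le]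
    have e2 : ((d : ℝ) + 1) ^ (1 - α) = ((d : ℝ) + 1) * ((d : ℝ) + 1) ^ (-α) := by
      rw [show (1 : ℝ) - α = 1 + -α by ring, Real.rpow_add hdp, Real.rpow_one]
    constructor
    · intro hS a ha
      have hat : a ∈ t := Finset.mem_erase.2 ⟨ha, Finset.mem_univ _⟩
      have heq : (fun x : ℝ => x ^ α) (∑ i ∈ t, w • pfun d ψ i)
          = ∑ i ∈ t, w • (pfun d ψ i ^ α) := by
        show (∑ i ∈ t, w • pfun d ψ i) ^ α = ∑ i ∈ t, w • (pfun d ψ i ^ α)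
        rw [hcenter, e1, ← Finset.smul_sum, hS, e2, smul_eq_mul, hwdef, hN]
        have h1 : ((d : ℝ) - 1) ≠ 0 := hdm.ne'
        have h2 : ((d : ℝ) + 1) ≠ 0 := hdp.ne'
        field_simp
      have := (hf.map_sum_eq_iff (fun _ _ => hwpos) h₁ hmem).1 heq a hat
      rw [this, hcenter]
    · intro h
      have hterm : ∀ a ∈ t, pfun d ψ a ^ α = (1 / ((d : ℝ) + 1)) ^ α := by
        intro a ha
        rw [h a (Finset.mem_erase.1 ha).1]
      rw [Finset.sum_congr rfl hterm, Finset.sum_const, nsmul_eq_mul, hcard, e1, e2, hN]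
      ring

/-- A unit vector `ψ ∈ ℂ^d` achieves `M_α(ψ) = (1/(1-α)) log[(1 + (d-1)(d+1)^{1-α})/d]`
for some (equivalently every) `α ≥ 2` iff `|⟨ψ|D_a|ψ⟩|² = 1/(d+1)` for all `a ≠ 0`,
i.e. iff `ψ` is a fiducial vector of a Weyl–Heisenberg covariant SIC. -/
theorem stabEntropy_eq_max_iff_sic (d : ℕ) [NeZero d]
    (ψ : ZMod d → ℂ) (hψ : ∑ k, ‖ψ k‖ ^ 2 = 1) :
    ∀ α : ℝ, 2 ≤ α →
      (stabEntropy d α (proj ψ) =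
          (1 / (1 - α)) *
            Real.log ((1 + ((d : ℝ) - 1) * ((d : ℝ) + 1) ^ (1 - α)) / d) ↔
        ∀ a : ZMod d × ZMod d, a ≠ 0 →
          ‖star ψ ⬝ᵥ
            ((Disp d ((a.1.val : ℤ), (a.2.val : ℤ))).mulVec ψ)‖ ^ 2 = 1 / ((d : ℝ) + 1)) := by
  intro α hα
  have hdpos : (0 : ℝ) < d := by
    have := Nat.pos_of_ne_zero (NeZero.ne d); exact_mod_cast this
  have hd1 : (1 : ℝ) ≤ d := by
    have := Nat.one_le_iff_ne_zero.2 (NeZero.ne d); exact_mod_cast this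
  have h1α : (1 : ℝ) - α ≠ 0 := by linarith
  set S := ∑ a ∈ Finset.univ.erase (0 : ZMod d × ZMod d), pfun d ψ a ^ α with hSdef
  have hSnn : 0 ≤ S :=
    Finset.sum_nonneg fun a _ => Real.rpow_nonneg (pfun_nonneg ψ a) α
  set B := 1 + ((d : ℝ) - 1) * ((d : ℝ) + 1) ^ (1 - α) with hBdef
  have hBpos : 0 < B := by
    have h : 0 ≤ ((d : ℝ) - 1) * ((d : ℝ) + 1) ^ (1 - α) :=
      mul_nonneg (by linarith) (Real.rpow_nonneg (by linarith) _)
    rw [hBdef]; linarith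
  have hrne : ((d : ℝ) ^ (-α)) ≠ 0 := (Real.rpow_pos_of_pos hdpos _).ne'
  have hT : (∑ a : ZMod d × ZMod d,
      ((1 / (d : ℝ)) * ‖
        ((Disp d ((a.1.val : ℤ), (a.2.val : ℤ))) * proj ψ).trace‖ ^ 2) ^ α)
      = (d : ℝ) ^ (-α) * (1 + S) := by
    have hterm : ∀ a : ZMod d × ZMod d,
        ((1 / (d : ℝ)) * ‖
          ((Disp d ((a.1.val : ℤ), (a.2.val : ℤ))) * proj ψ).trace‖ ^ 2) ^ α
          = (d : ℝ) ^ (-α) * pfun d ψ a ^ α := by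
      intro a
      rw [trace_mul_proj]
      show ((1 / (d : ℝ)) * pfun d ψ a) ^ α = _
      rw [Real.mul_rpow (by positivity) (pfun_nonneg ψ a), one_div,
        Real.inv_rpow hdpos.le, ← Real.rpow_neg hdpos.le]
    rw [Finset.sum_congr rfl fun a _ => hterm a, ← Finset.mul_sum]
    congr 1
    rw [← Finset.add_sum_erase _ _ (Finset.mem_univ (0 : ZMod d × ZMod d)),
      pfun_zero ψ hψ, Real.one_rpow, hSdef]
  have hTpos : (0 : ℝ) < (d : ℝ) ^ (-α) * (1 + S) :=
    mul_pos (Real.rpow_pos_of_pos hdpos _) (by linarith)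
  have key : (stabEntropy d α (proj ψ) = (1 / (1 - α)) * Real.log (B / d)) ↔
      S = ((d : ℝ) - 1) * ((d : ℝ) + 1) ^ (1 - α) := by
    rw [stabEntropy, hT, sub_eq_iff_eq_add,
      show (1 / (1 - α)) * Real.log (B / d) + Real.log d
          = (1 / (1 - α)) * (Real.log (B / d) + (1 - α) * Real.log d) by
        field_simp,
      mul_right_inj' (one_div_ne_zero h1α)]
    have hrhs : Real.log (B / (d : ℝ)) + (1 - α) * Real.log d
        = Real.log ((d : ℝ) ^ (-α) * B) := by
      rw [Real.log_div hBpos.ne' hdpos.ne', Real.log_mul hrne hBpos.ne',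
        Real.log_rpow hdpos]
      ring
    rw [hrhs,
      Real.log_injOn_pos.eq_iff (Set.mem_Ioi.2 hTpos)
        (Set.mem_Ioi.2 (mul_pos (Real.rpow_pos_of_pos hdpos _) hBpos))]
    constructor
    · intro h
      have h2 := mul_left_cancel₀ hrne h
      rw [hBdef] at h2
      linarith
    · intro h
      rw [hBdef, h]
  rw [key]
  exact sum_rpow_eq_iff ψ hψ α hα
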